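/- Let g = e^{2f}|dz|² be a smooth conformal metric on the unit disc D whose Gaussian curvature satisfies K_g < -ε² < 0 everywhere. Then e^{2f(z)} < 4/(ε²(1-|z|²)²) for all z ∈ D. -/

import Mathlib

/-- The Euclidean Laplacian `Δ₀ f = f_xx + f_yy` of `f : ℂ → ℝ`. -/
noncomputable def euclLap (f : ℂ → ℝ) (z : ℂ) : ℝ :=
  fderiv ℝ (fun w => fderiv ℝ f w 1) z 1 +
  fderiv ℝ (fun w => fderiv ℝ f w Complex.I) z Complex.I

open Filter Topology Metric Complex

lemma deriv2_nonpos_of_isLocalMax {h : ℝ → ℝ} {a : ℝ}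
    (hd : ∀ᶠ x in 𝓝 a, DifferentiableAt ℝ h x)
    (hd2 : DifferentiableAt ℝ (deriv h) a) (hmax : IsLocalMax h a) :
    deriv (deriv h) a ≤ 0 := by
  by_contra hpos
  push_neg at hpos
  have h0 : deriv h a = 0 := hmax.deriv_eq_zero
  have hslope : Tendsto (slope (deriv h) a) (𝓝[≠] a) (𝓝 (deriv (deriv h) a)) :=
    hasDerivAt_iff_tendsto_slope.mp hd2.hasDerivAt
  have hmono : 𝓝[>] a ≤ 𝓝[≠] a :=
    nhdsWithin_mono a (fun x hx => ne_of_gt hx)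
  have hev : ∀ᶠ x in 𝓝[>] a, 0 < deriv h x := by
    filter_upwards [(hslope.mono_left hmono).eventually (eventually_gt_nhds hpos),
      self_mem_nhdsWithin] with x hx hxa
    have hxa' : 0 < x - a := sub_pos.mpr hxa
    rw [slope_def_field, h0, sub_zero] at hx
    rcases div_pos_iff.mp hx with h' | h'
    · exact h'.1
    · exact absurd h'.2 (not_lt.mpr hxa'.le)
  obtain ⟨u, hu, hIoo⟩ := mem_nhdsGT_iff_exists_Ioo_subset.mp hev
  obtain ⟨δ, δpos, hδ⟩ := Metric.eventually_nhds_iff.mp (hd.and hmax)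
  set b := min ((a + u) / 2) (a + δ / 2) with hb
  have hab : a < b := by
    simp only [hb, lt_min_iff]
    constructor
    · linarith [hu.out]
    · linarith
  have hbu : b < u := by
    have : (a + u) / 2 < u := by linarith [hu.out]
    exact lt_of_le_of_lt (min_le_left _ _) this
  have hsub : Set.Icc a b ⊆ {x | dist x a < δ} := by
    intro x hx
    have h1 : a ≤ x := hx.1
    have h2 : x ≤ b := hx.2
    have : x ≤ a + δ / 2 := le_trans h2 (min_le_right _ _)
    simp only [Set.mem_setOf_eq, Real.dist_eq, abs_lt]
    constructor <;> linarith
  have hcont : ContinuousOn h (Set.Icc a b) := fun x hx =>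
    ((hδ (hsub hx)).1.continuousAt).continuousWithinAt
  have hderiv : ∀ x ∈ interior (Set.Icc a b), 0 < deriv h x := by
    rw [interior_Icc]
    intro x hx
    exact hIoo ⟨hx.1, lt_trans hx.2 hbu⟩
  have hmono2 : StrictMonoOn h (Set.Icc a b) :=
    strictMonoOn_of_deriv_pos (convex_Icc a b) hcont hderiv
  have : h a < h b := hmono2 (Set.left_mem_Icc.mpr hab.le) (Set.right_mem_Icc.mpr hab.le) hab
  have : h b ≤ h a := (hδ (hsub (Set.right_mem_Icc.mpr hab.le))).2
  linarith

lemma line_secondDeriv_nonpos {u : ℂ → ℝ} {z₀ : ℂ} (v : ℂ)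
    (hu1 : ∀ᶠ w in 𝓝 z₀, DifferentiableAt ℝ u w)
    (hu2 : DifferentiableAt ℝ (fun w => fderiv ℝ u w v) z₀)
    (hmax : IsLocalMax u z₀) :
    fderiv ℝ (fun w => fderiv ℝ u w v) z₀ v ≤ 0 := by
  set ℓ : ℝ → ℂ := fun t => z₀ + t • v with hℓ
  have hℓd : ∀ t : ℝ, HasDerivAt ℓ v t := by
    intro t
    simpa [hℓ] using ((hasDerivAt_id t).smul_const v).const_add z₀
  have hℓ0 : ℓ 0 = z₀ := by simp [hℓ]
  have hℓc : Tendsto ℓ (𝓝 0) (𝓝 z₀) := by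
    have := (hℓd 0).continuousAt.tendsto
    rwa [hℓ0] at this
  set h : ℝ → ℝ := fun t => u (ℓ t) with hh
  have hder : ∀ᶠ t in 𝓝 0, HasDerivAt h (fderiv ℝ u (ℓ t) v) t := by
    filter_upwards [hℓc.eventually hu1] with t ht
    exact ht.hasFDerivAt.comp_hasDerivAt t (hℓd t)
  have hderiv_eq : deriv h =ᶠ[𝓝 0] fun t => fderiv ℝ u (ℓ t) v := by
    filter_upwards [hder] with t ht using ht.deriv
  have hD2 : HasDerivAt (fun t => fderiv ℝ u (ℓ t) v)
      (fderiv ℝ (fun w => fderiv ℝ u w v) z₀ v) 0 := by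
    have h' : HasFDerivAt (fun w => fderiv ℝ u w v)
        (fderiv ℝ (fun w => fderiv ℝ u w v) z₀) (ℓ 0) := by
      rw [hℓ0]; exact hu2.hasFDerivAt
    exact h'.comp_hasDerivAt 0 (hℓd 0)
  have key : deriv (deriv h) 0 = fderiv ℝ (fun w => fderiv ℝ u w v) z₀ v := by
    rw [hderiv_eq.deriv_eq]
    exact hD2.deriv
  rw [← key]
  apply deriv2_nonpos_of_isLocalMax
  · filter_upwards [hder] with t ht using ht.differentiableAt
  · rw [hderiv_eq.differentiableAt_iff]
    exact hD2.differentiableAt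
  · have : ∀ᶠ t in 𝓝 (0:ℝ), h t ≤ h 0 := by
      filter_upwards [hℓc.eventually hmax] with t ht
      simpa [hh, hℓ0] using ht
    exact this

lemma euclLap_nonpos_of_isLocalMax {u : ℂ → ℝ} {z₀ : ℂ}
    (hu1 : ∀ᶠ w in 𝓝 z₀, DifferentiableAt ℝ u w)
    (hu21 : DifferentiableAt ℝ (fun w => fderiv ℝ u w 1) z₀)
    (hu2I : DifferentiableAt ℝ (fun w => fderiv ℝ u w Complex.I) z₀)
    (hmax : IsLocalMax u z₀) : euclLap u z₀ ≤ 0 := by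
  have h1 := line_secondDeriv_nonpos 1 hu1 hu21 hmax
  have h2 := line_secondDeriv_nonpos Complex.I hu1 hu2I hmax
  unfold euclLap
  linarith

noncomputable def nmap (w : ℂ) : ℂ →L[ℝ] ℝ :=
  (-(2*w.re)) • Complex.reCLM + (-(2*w.im)) • Complex.imCLM

@[simp] lemma nmap_apply (w v : ℂ) : nmap w v = -(2*w.re) * v.re + -(2*w.im) * v.im := by
  simp [nmap]

lemma hasFDerivAt_sub_normSq (c : ℝ) (w : ℂ) :
    HasFDerivAt (fun z : ℂ => c - Complex.normSq z) (nmap w) w := by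
  have hre : HasFDerivAt (fun z : ℂ => z.re) Complex.reCLM w := Complex.reCLM.hasFDerivAt
  have him : HasFDerivAt (fun z : ℂ => z.im) Complex.imCLM w := Complex.imCLM.hasFDerivAt
  have h1 : HasFDerivAt (fun z : ℂ => c - (z.re*z.re + z.im*z.im)) _ w :=
    ((hre.mul hre).add (him.mul him)).const_sub c
  have heq : (fun z : ℂ => c - (z.re*z.re + z.im*z.im)) = fun z : ℂ => c - Complex.normSq z := by
    funext z; rw [Complex.normSq_apply]
  rw [heq] at h1
  refine h1.congr_fderiv ?_
  ext v
  simp [nmap]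
  ring

lemma hasFDerivAt_log_sub_normSq (c : ℝ) {w : ℂ} (hw : Complex.normSq w < c) :
    HasFDerivAt (fun z : ℂ => Real.log (c - Complex.normSq z))
      ((c - Complex.normSq w)⁻¹ • nmap w) w :=
  (hasFDerivAt_sub_normSq c w).log (ne_of_gt (sub_pos.mpr hw))

lemma hasFDerivAt_inv_sub_normSq (c : ℝ) {w : ℂ} (hw : Complex.normSq w < c) :
    HasFDerivAt (fun z : ℂ => (c - Complex.normSq z)⁻¹)
      ((-((c - Complex.normSq w) ^ 2)⁻¹) • nmap w) w :=
  (hasDerivAt_inv (ne_of_gt (sub_pos.mpr hw))).comp_hasFDerivAt w (hasFDerivAt_sub_normSq c w)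

lemma fderiv_log_sub_normSq_one {c : ℝ} {w : ℂ} (hw : Complex.normSq w < c) :
    fderiv ℝ (fun z : ℂ => Real.log (c - Complex.normSq z)) w 1
      = (c - Complex.normSq w)⁻¹ * (-2 * w.re) := by
  rw [(hasFDerivAt_log_sub_normSq c hw).fderiv]
  simp

lemma fderiv_log_sub_normSq_I {c : ℝ} {w : ℂ} (hw : Complex.normSq w < c) :
    fderiv ℝ (fun z : ℂ => Real.log (c - Complex.normSq z)) w Complex.I
      = (c - Complex.normSq w)⁻¹ * (-2 * w.im) := by
  rw [(hasFDerivAt_log_sub_normSq c hw).fderiv]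
  simp

lemma isOpen_normSq_lt (c : ℝ) : IsOpen {w : ℂ | Complex.normSq w < c} :=
  isOpen_lt Complex.continuous_normSq continuous_const

lemma euclLap_log {c : ℝ} {z : ℂ} (hz : Complex.normSq z < c) :
    euclLap (fun w : ℂ => Real.log (c - Complex.normSq w)) z
      = -(4*c) / (c - Complex.normSq z)^2 := by
  have hmem : {w : ℂ | Complex.normSq w < c} ∈ 𝓝 z :=
    (isOpen_normSq_lt c).mem_nhds hz
  have hre : HasFDerivAt (fun z : ℂ => z.re) Complex.reCLM z := Complex.reCLM.hasFDerivAt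
  have him : HasFDerivAt (fun z : ℂ => z.im) Complex.imCLM z := Complex.imCLM.hasFDerivAt
  have hg1 : HasFDerivAt (fun w : ℂ => (c - Complex.normSq w)⁻¹ * (-2 * w.re))
      ((c - Complex.normSq z)⁻¹ • ((-2:ℝ) • Complex.reCLM) +
        (-2 * z.re) • ((-((c - Complex.normSq z) ^ 2)⁻¹) • nmap z)) z :=
    (hasFDerivAt_inv_sub_normSq c hz).mul (hre.const_mul (-2))
  have hg2 : HasFDerivAt (fun w : ℂ => (c - Complex.normSq w)⁻¹ * (-2 * w.im))
      ((c - Complex.normSq z)⁻¹ • ((-2:ℝ) • Complex.imCLM) +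
        (-2 * z.im) • ((-((c - Complex.normSq z) ^ 2)⁻¹) • nmap z)) z :=
    (hasFDerivAt_inv_sub_normSq c hz).mul (him.const_mul (-2))
  have he1 : (fun w => fderiv ℝ (fun z : ℂ => Real.log (c - Complex.normSq z)) w 1)
      =ᶠ[𝓝 z] fun w : ℂ => (c - Complex.normSq w)⁻¹ * (-2 * w.re) := by
    filter_upwards [hmem] with w hw using fderiv_log_sub_normSq_one hw
  have he2 : (fun w => fderiv ℝ (fun z : ℂ => Real.log (c - Complex.normSq z)) w Complex.I)
      =ᶠ[𝓝 z] fun w : ℂ => (c - Complex.normSq w)⁻¹ * (-2 * w.im) := by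
    filter_upwards [hmem] with w hw using fderiv_log_sub_normSq_I hw
  have hs : (0:ℝ) < c - Complex.normSq z := sub_pos.mpr hz
  have hne : (c - Complex.normSq z) ≠ 0 := ne_of_gt hs
  have hnsq : Complex.normSq z = z.re^2 + z.im^2 := by rw [Complex.normSq_apply]; ring
  rw [hnsq] at hne ⊢
  unfold euclLap
  rw [he1.fderiv_eq, he2.fderiv_eq, hg1.fderiv, hg2.fderiv]
  simp only [ContinuousLinearMap.add_apply, ContinuousLinearMap.smul_apply, nmap_apply,
    Complex.reCLM_apply, Complex.imCLM_apply, Complex.one_re, Complex.one_im, Complex.I_re,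
    Complex.I_im, smul_eq_mul, hnsq]
  field_simp
  ring

lemma fderiv_log_eventually_one {c : ℝ} {z : ℂ} (hz : Complex.normSq z < c) :
    (fun w => fderiv ℝ (fun z : ℂ => Real.log (c - Complex.normSq z)) w 1)
      =ᶠ[𝓝 z] fun w : ℂ => (c - Complex.normSq w)⁻¹ * (-2 * w.re) := by
  filter_upwards [(isOpen_normSq_lt c).mem_nhds hz] with w hw using fderiv_log_sub_normSq_one hw

lemma fderiv_log_eventually_I {c : ℝ} {z : ℂ} (hz : Complex.normSq z < c) :
    (fun w => fderiv ℝ (fun z : ℂ => Real.log (c - Complex.normSq z)) w Complex.I)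
      =ᶠ[𝓝 z] fun w : ℂ => (c - Complex.normSq w)⁻¹ * (-2 * w.im) := by
  filter_upwards [(isOpen_normSq_lt c).mem_nhds hz] with w hw using fderiv_log_sub_normSq_I hw

lemma diffAt_fderiv_log_one {c : ℝ} {z : ℂ} (hz : Complex.normSq z < c) :
    DifferentiableAt ℝ
      (fun w => fderiv ℝ (fun z : ℂ => Real.log (c - Complex.normSq z)) w 1) z := by
  rw [(fderiv_log_eventually_one hz).differentiableAt_iff]
  exact ((hasFDerivAt_inv_sub_normSq c hz).differentiableAt).mul
    ((Complex.reCLM.differentiable.differentiableAt).const_mul (-2))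

lemma diffAt_fderiv_log_I {c : ℝ} {z : ℂ} (hz : Complex.normSq z < c) :
    DifferentiableAt ℝ
      (fun w => fderiv ℝ (fun z : ℂ => Real.log (c - Complex.normSq z)) w Complex.I) z := by
  rw [(fderiv_log_eventually_I hz).differentiableAt_iff]
  exact ((hasFDerivAt_inv_sub_normSq c hz).differentiableAt).mul
    ((Complex.imCLM.differentiable.differentiableAt).const_mul (-2))

lemma key_lemma (f : ℂ → ℝ) (ε : ℝ) (hε : 0 < ε)
    (hf : ContDiffOn ℝ 2 f (Metric.ball 0 1))
    (hK : ∀ z ∈ Metric.ball (0 : ℂ) 1,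
      -Real.exp (-(2 * f z)) * euclLap f z < -ε ^ 2)
    {c : ℝ} {z₀ : ℂ} (hz₀ : z₀ ∈ Metric.ball (0:ℂ) 1) (hc : Complex.normSq z₀ < c)
    (hmax : IsLocalMax (fun w => 2 * f w + 2 * Real.log (c - Complex.normSq w)) z₀) :
    ε^2 * Real.exp (2 * f z₀) < 4 * c / (c - Complex.normSq z₀)^2 := by
  set φ : ℂ → ℝ := fun w => Real.log (c - Complex.normSq w) with hφdef
  set u : ℂ → ℝ := fun w => 2 * f w + 2 * φ w with hudef
  have hball : Metric.ball (0:ℂ) 1 ∈ 𝓝 z₀ := Metric.isOpen_ball.mem_nhds hz₀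
  have hS : (Metric.ball (0:ℂ) 1 ∩ {w | Complex.normSq w < c}) ∈ 𝓝 z₀ :=
    Filter.inter_mem hball ((isOpen_normSq_lt c).mem_nhds hc)
  have hfd : ∀ w ∈ Metric.ball (0:ℂ) 1, DifferentiableAt ℝ f w := fun w hw =>
    (hf.contDiffAt (Metric.isOpen_ball.mem_nhds hw)).differentiableAt (by norm_num)
  have hφd : ∀ w : ℂ, Complex.normSq w < c → DifferentiableAt ℝ φ w := fun w hw =>
    (hasFDerivAt_log_sub_normSq c hw).differentiableAt
  have hu1 : ∀ᶠ w in 𝓝 z₀, DifferentiableAt ℝ u w := by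
    filter_upwards [hS] with w hw
    exact ((hfd w hw.1).const_mul 2).add ((hφd w hw.2).const_mul 2)
  have hev : ∀ v : ℂ, (fun w => fderiv ℝ u w v)
      =ᶠ[𝓝 z₀] fun w => 2 * fderiv ℝ f w v + 2 * fderiv ℝ φ w v := by
    intro v
    filter_upwards [hS] with w hw
    have h1 := (hfd w hw.1).const_mul (2:ℝ)
    have h2 := (hφd w hw.2).const_mul (2:ℝ)
    have hadd : fderiv ℝ u w = fderiv ℝ (fun y => 2 * f y) w + fderiv ℝ (fun y => 2 * φ y) w :=
      fderiv_add h1 h2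
    rw [hadd, fderiv_const_mul (hfd w hw.1) 2, fderiv_const_mul (hφd w hw.2) 2]
    simp
  have hC2 : ContDiffAt ℝ 2 f z₀ := hf.contDiffAt hball
  have hfdd : DifferentiableAt ℝ (fderiv ℝ f) z₀ :=
    (hC2.fderiv_right (m := 1) (by norm_num)).differentiableAt (by norm_num)
  have hFv : ∀ v : ℂ, DifferentiableAt ℝ (fun w => fderiv ℝ f w v) z₀ := fun v =>
    ((ContinuousLinearMap.apply ℝ ℝ v).differentiable.differentiableAt).comp z₀ hfdd
  have hu21 : DifferentiableAt ℝ (fun w => fderiv ℝ u w 1) z₀ := by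
    rw [(hev 1).differentiableAt_iff]
    exact ((hFv 1).const_mul 2).add ((diffAt_fderiv_log_one hc).const_mul 2)
  have hu2I : DifferentiableAt ℝ (fun w => fderiv ℝ u w Complex.I) z₀ := by
    rw [(hev Complex.I).differentiableAt_iff]
    exact ((hFv Complex.I).const_mul 2).add ((diffAt_fderiv_log_I hc).const_mul 2)
  have hlap : euclLap u z₀ ≤ 0 := euclLap_nonpos_of_isLocalMax hu1 hu21 hu2I hmax
  have hsplit : euclLap u z₀ = 2 * euclLap f z₀ + 2 * euclLap φ z₀ := by
    unfold euclLap
    rw [(hev 1).fderiv_eq, (hev Complex.I).fderiv_eq,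
        fderiv_fun_add ((hFv 1).const_mul 2) ((diffAt_fderiv_log_one hc).const_mul 2),
        fderiv_const_mul (hFv 1) 2, fderiv_const_mul (diffAt_fderiv_log_one hc) 2,
        fderiv_fun_add ((hFv Complex.I).const_mul 2) ((diffAt_fderiv_log_I hc).const_mul 2),
        fderiv_const_mul (hFv Complex.I) 2, fderiv_const_mul (diffAt_fderiv_log_I hc) 2]
    simp
    ring
  have hφlap : euclLap φ z₀ = -(4*c) / (c - Complex.normSq z₀)^2 := euclLap_log hc
  have hKz := hK z₀ hz₀
  have hexp : (0:ℝ) < Real.exp (2 * f z₀) := Real.exp_pos _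
  have h1 : ε^2 * Real.exp (2*f z₀) < euclLap f z₀ := by
    have h2 : ε ^ 2 < Real.exp (-(2 * f z₀)) * euclLap f z₀ := by linarith
    have h3 := (mul_lt_mul_iff_right₀ hexp).mpr h2
    rw [← mul_assoc, ← Real.exp_add] at h3
    simp at h3
    linarith
  have h4 : euclLap f z₀ ≤ 4*c/(c - Complex.normSq z₀)^2 := by
    rw [hsplit, hφlap] at hlap
    have hnd : -(4*c) / (c - Complex.normSq z₀)^2 = -(4*c/(c - Complex.normSq z₀)^2) := by ring
    rw [hnd] at hlap
    linarith
  linarith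

lemma log_U_eq (f : ℂ → ℝ) {c : ℝ} {w : ℂ} (hw : Complex.normSq w < c) :
    Real.log (Real.exp (2 * f w) * (c - Complex.normSq w)^2)
      = 2 * f w + 2 * Real.log (c - Complex.normSq w) := by
  have hs : (0:ℝ) < c - Complex.normSq w := sub_pos.mpr hw
  rw [Real.log_mul (Real.exp_ne_zero _) (pow_ne_zero 2 (ne_of_gt hs)), Real.log_exp,
    Real.log_pow]
  push_cast
  ring

lemma nonstrict (f : ℂ → ℝ) (ε : ℝ) (hε : 0 < ε)
    (hf : ContDiffOn ℝ 2 f (Metric.ball 0 1))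
    (hK : ∀ z ∈ Metric.ball (0 : ℂ) 1,
      -Real.exp (-(2 * f z)) * euclLap f z < -ε ^ 2) :
    ∀ z ∈ Metric.ball (0 : ℂ) 1,
      ε^2 * (Real.exp (2 * f z) * (1 - Complex.normSq z)^2) ≤ 4 := by
  intro z hz
  have hz1 : ‖z‖ < 1 := mem_ball_zero_iff.mp hz
  have stepr : ∀ r : ℝ, ‖z‖ < r → r < 1 →
      ε^2 * (Real.exp (2 * f z) * (r^2 - Complex.normSq z)^2) < 4 * r^2 := by
    intro r hzr hr1
    have hrpos : 0 < r := lt_of_le_of_lt (norm_nonneg z) hzr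
    set U : ℂ → ℝ := fun w => Real.exp (2 * f w) * (r^2 - Complex.normSq w)^2 with hUdef
    have hsub : Metric.closedBall (0:ℂ) r ⊆ Metric.ball 0 1 :=
      Metric.closedBall_subset_ball hr1
    have hUc : ContinuousOn U (Metric.closedBall (0:ℂ) r) := by
      apply ContinuousOn.mul
      · exact Real.continuous_exp.comp_continuousOn
          (continuousOn_const.mul (hf.continuousOn.mono hsub))
      · exact (((continuous_const.sub Complex.continuous_normSq).pow 2)).continuousOn
    have hzmem : z ∈ Metric.closedBall (0:ℂ) r := mem_closedBall_zero_iff.mpr hzr.le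
    obtain ⟨w₀, hw₀mem, hw₀max⟩ :=
      (isCompact_closedBall (0:ℂ) r).exists_isMaxOn ⟨z, hzmem⟩ hUc
    have hnz : Complex.normSq z < r^2 := by
      rw [Complex.normSq_eq_norm_sq]
      exact pow_lt_pow_left₀ hzr (norm_nonneg z) (by norm_num)
    have hUz : 0 < U z := by
      have : (0:ℝ) < r^2 - Complex.normSq z := sub_pos.mpr hnz
      positivity
    have hw₀lt : ‖w₀‖ < r := by
      rcases lt_or_eq_of_le (mem_closedBall_zero_iff.mp hw₀mem) with h | h
      · exact h
      · exfalso
        have hU0 : U w₀ = 0 := by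
          have : Complex.normSq w₀ = r^2 := by rw [Complex.normSq_eq_norm_sq, h]
          simp [hUdef, this]
        have := hw₀max hzmem
        rw [Set.mem_setOf_eq, hU0] at this
        linarith
    have hw₀n : Complex.normSq w₀ < r^2 := by
      rw [Complex.normSq_eq_norm_sq]
      exact pow_lt_pow_left₀ hw₀lt (norm_nonneg w₀) (by norm_num)
    have hw₀ball : w₀ ∈ Metric.ball (0:ℂ) 1 := mem_ball_zero_iff.mpr (hw₀lt.trans hr1)
    have hUpos : ∀ w : ℂ, Complex.normSq w < r^2 → 0 < U w := by
      intro w hw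
      have : (0:ℝ) < r^2 - Complex.normSq w := sub_pos.mpr hw
      positivity
    have hmax : IsLocalMax (fun w => 2 * f w + 2 * Real.log (r^2 - Complex.normSq w)) w₀ := by
      have hball : Metric.ball (0:ℂ) r ∈ 𝓝 w₀ :=
        Metric.isOpen_ball.mem_nhds (mem_ball_zero_iff.mpr hw₀lt)
      filter_upwards [hball] with w hw
      have hwn : Complex.normSq w < r^2 := by
        rw [Complex.normSq_eq_norm_sq]
        exact pow_lt_pow_left₀ (mem_ball_zero_iff.mp hw) (norm_nonneg w) (by norm_num)
      have hle : U w ≤ U w₀ := hw₀max (Metric.ball_subset_closedBall hw)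
      have := Real.log_le_log (hUpos w hwn) hle
      rwa [log_U_eq f hwn, log_U_eq f hw₀n] at this
    have hkey := key_lemma f ε hε hf hK hw₀ball hw₀n hmax
    have hs₀ : (0:ℝ) < (r^2 - Complex.normSq w₀)^2 := by
      have : (0:ℝ) < r^2 - Complex.normSq w₀ := sub_pos.mpr hw₀n
      positivity
    have h5 : ε^2 * Real.exp (2 * f w₀) * (r^2 - Complex.normSq w₀)^2 < 4 * r^2 :=
      (lt_div_iff₀ hs₀).mp hkey
    have h6 : U z ≤ U w₀ := hw₀max hzmem
    have hε2 : (0:ℝ) < ε^2 := by positivity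
    calc ε^2 * (Real.exp (2 * f z) * (r^2 - Complex.normSq z)^2)
        = ε^2 * U z := rfl
      _ ≤ ε^2 * U w₀ := by exact mul_le_mul_of_nonneg_left h6 hε2.le
      _ = ε^2 * Real.exp (2 * f w₀) * (r^2 - Complex.normSq w₀)^2 := by
          simp [hUdef]; ring
      _ < 4 * r^2 := h5
  have hF : Filter.Tendsto (fun r : ℝ => ε^2 * (Real.exp (2 * f z) * (r^2 - Complex.normSq z)^2))
      (𝓝[<] (1:ℝ)) (𝓝 (ε^2 * (Real.exp (2 * f z) * (1 - Complex.normSq z)^2))) := by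
    apply Filter.Tendsto.mono_left _ nhdsWithin_le_nhds
    have hcont : Continuous (fun r : ℝ =>
        ε^2 * (Real.exp (2 * f z) * (r^2 - Complex.normSq z)^2)) := by continuity
    have := hcont.tendsto 1
    simpa using this
  have hG : Filter.Tendsto (fun r : ℝ => 4 * r^2) (𝓝[<] (1:ℝ)) (𝓝 (4:ℝ)) := by
    apply Filter.Tendsto.mono_left _ nhdsWithin_le_nhds
    have hcont : Continuous (fun r : ℝ => 4 * r^2) := by continuity
    have := hcont.tendsto 1
    simpa using this
  have hev : ∀ᶠ r in 𝓝[<] (1:ℝ),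
      ε^2 * (Real.exp (2 * f z) * (r^2 - Complex.normSq z)^2) ≤ 4 * r^2 := by
    filter_upwards [Ioo_mem_nhdsLT_of_mem (Set.mem_Ioc.mpr ⟨hz1, le_refl 1⟩)] with r hr
    exact (stepr r hr.1 hr.2).le
  exact le_of_tendsto_of_tendsto hF hG hev

/-- Ahlfors–Schwarz lemma: let `g = e^{2f}|dz|²` be a smooth
conformal metric on the unit disc whose Gaussian curvature
`K_g = -e^{-2f}Δ₀f` satisfies `K_g < -ε² < 0`.  Then
`e^{2f(z)} < 4/(ε²(1-|z|²)²)` for all `z` in the disc. -/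
theorem stmt_13 (f : ℂ → ℝ) (ε : ℝ) (hε : 0 < ε)
    (hf : ContDiffOn ℝ 2 f (Metric.ball 0 1))
    (hK : ∀ z ∈ Metric.ball (0 : ℂ) 1,
      -Real.exp (-(2 * f z)) * euclLap f z < -ε ^ 2) :
    ∀ z ∈ Metric.ball (0 : ℂ) 1,
      Real.exp (2 * f z) < 4 / (ε ^ 2 * (1 - ‖z‖ ^ 2) ^ 2) := by
  intro z hz
  have hz1 : ‖z‖ < 1 := mem_ball_zero_iff.mp hz
  have hn : Complex.normSq z < 1 := by
    rw [Complex.normSq_eq_norm_sq]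
    nlinarith [norm_nonneg z]
  have hle := nonstrict f ε hε hf hK z hz
  have hεsq : (0:ℝ) < ε^2 := by positivity
  have hssq : (0:ℝ) < (1 - Complex.normSq z)^2 := by
    have : (0:ℝ) < 1 - Complex.normSq z := sub_pos.mpr hn
    positivity
  have hstrict : ε^2 * (Real.exp (2 * f z) * (1 - Complex.normSq z)^2) < 4 := by
    rcases lt_or_eq_of_le hle with h | h
    · exact h
    · exfalso
      have hmax : IsLocalMax (fun w => 2 * f w + 2 * Real.log (1 - Complex.normSq w)) z := by
        filter_upwards [Metric.isOpen_ball.mem_nhds hz] with w hw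
        have hwn : Complex.normSq w < 1 := by
          rw [Complex.normSq_eq_norm_sq]
          have := mem_ball_zero_iff.mp hw
          nlinarith [norm_nonneg w]
        have h1 := nonstrict f ε hε hf hK w hw
        have hVle : Real.exp (2 * f w) * (1 - Complex.normSq w)^2
            ≤ Real.exp (2 * f z) * (1 - Complex.normSq z)^2 := by
          nlinarith
        have hVpos : 0 < Real.exp (2 * f w) * (1 - Complex.normSq w)^2 := by
          have : (0:ℝ) < 1 - Complex.normSq w := sub_pos.mpr hwn
          positivity
        have := Real.log_le_log hVpos hVle
        rwa [log_U_eq f hwn, log_U_eq f hn] at this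
      have hkey := key_lemma f ε hε hf hK hz hn hmax
      have h5 := (lt_div_iff₀ hssq).mp hkey
      nlinarith [h5]
  rw [show ‖z‖^2 = Complex.normSq z from (Complex.normSq_eq_norm_sq z).symm]
  rw [lt_div_iff₀ (mul_pos hεsq hssq)]
  nlinarith [hstrict]
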